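/- Let ω ∈ (0, π) satisfy ω + tan ω = 0 and define a_k, b_k as the unique solutions of 2πk = 2πβ·sqrt(1 - (1/(2πβ))²) - arccos(1/(2πβ)) and 2πk = 2πβ·sqrt(1 - (sec ω/(2πβ))²) - arccos(sec ω/(2πβ)) respectively. Then the sequences interlace: 0 < a_0 < b_0 < a_1 < b_1 < ⋯ < a_k < b_k < a_{k+1} < ⋯. -/

import Mathlib

open Real

private lemma aux_sqrt {c x : ℝ} (hx : 0 < x) :
    x * Real.sqrt (1 - (c / x) ^ 2) = Real.sqrt (x ^ 2 - c ^ 2) := by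
  have h : 1 - (c / x) ^ 2 = (x ^ 2 - c ^ 2) / x ^ 2 := by field_simp
  rw [h, Real.sqrt_div' _ (by positivity), Real.sqrt_sq hx.le,
    mul_div_cancel₀ _ hx.ne']

private lemma sqrt_subadd {u v : ℝ} (hu : 0 ≤ u) (hv : 0 ≤ v) :
    Real.sqrt (u + v) ≤ Real.sqrt u + Real.sqrt v := by
  rw [Real.sqrt_le_iff]
  constructor
  · positivity
  · nlinarith [Real.sq_sqrt hu, Real.sq_sqrt hv, Real.sqrt_nonneg u, Real.sqrt_nonneg v,
      mul_nonneg (Real.sqrt_nonneg u) (Real.sqrt_nonneg v)]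

private lemma mono_f {c : ℝ} (hc : 1 ≤ |c|) :
    StrictMonoOn (fun x => Real.sqrt (x ^ 2 - c ^ 2) - Real.arccos (c / x)) (Set.Ici |c|) := by
  apply strictMonoOn_of_deriv_pos (convex_Ici _)
  · apply ContinuousOn.sub
    · exact (Real.continuous_sqrt.comp (by continuity)).continuousOn
    · apply Real.continuous_arccos.comp_continuousOn
      apply ContinuousOn.div continuousOn_const continuousOn_id
      intro x hx
      have h1 : (1:ℝ) ≤ x := le_trans hc hx
      simp only [id]
      intro h
      rw [h] at h1
      linarith
  · intro x hx
    rw [interior_Ici] at hx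
    have habs : |c| < x := hx
    have hx1 : 1 < x := lt_of_le_of_lt hc habs
    have hx0 : 0 < x := lt_trans one_pos hx1
    have hc2 : c ^ 2 < x ^ 2 := by nlinarith [sq_abs c, abs_nonneg c]
    have hpos : 0 < x ^ 2 - c ^ 2 := by linarith
    have hr : 0 < Real.sqrt (x ^ 2 - c ^ 2) := Real.sqrt_pos.mpr hpos
    have h1 : HasDerivAt (fun x : ℝ => x ^ 2 - c ^ 2) (2 * x) x := by
      simpa using (hasDerivAt_pow 2 x).sub_const (c ^ 2)
    have h2 : HasDerivAt (fun x : ℝ => Real.sqrt (x ^ 2 - c ^ 2))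
        (1 / (2 * Real.sqrt (x ^ 2 - c ^ 2)) * (2 * x)) x :=
      (Real.hasDerivAt_sqrt hpos.ne').comp x h1
    have hd : HasDerivAt (fun x : ℝ => c / x) (-(c / x ^ 2)) x := by
      have := (hasDerivAt_inv hx0.ne').const_mul c
      simpa [div_eq_mul_inv, mul_comm] using this
    have hlt : |c / x| < 1 := by
      rw [abs_div, abs_of_pos hx0, div_lt_one hx0]; exact habs
    have h3 : HasDerivAt (fun x : ℝ => Real.arccos (c / x))
        (-(1 / Real.sqrt (1 - (c / x) ^ 2)) * -(c / x ^ 2)) x :=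
      (Real.hasDerivAt_arccos (abs_lt.mp hlt).1.ne' (abs_lt.mp hlt).2.ne).comp x hd
    have hD := (h2.sub h3).deriv
    rw [show (fun x : ℝ => Real.sqrt (x ^ 2 - c ^ 2) - Real.arccos (c / x)) =
        ((fun x : ℝ => Real.sqrt (x ^ 2 - c ^ 2)) - fun x => Real.arccos (c / x)) from rfl, hD]
    have hsx : Real.sqrt (1 - (c / x) ^ 2) = Real.sqrt (x ^ 2 - c ^ 2) / x := by
      rw [eq_div_iff hx0.ne', mul_comm, aux_sqrt hx0]
    have hxc : c < x ^ 2 := by nlinarith [le_abs_self c, abs_nonneg c]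
    have key : 1 / (2 * Real.sqrt (x ^ 2 - c ^ 2)) * (2 * x) -
        (-(1 / Real.sqrt (1 - (c / x) ^ 2)) * -(c / x ^ 2)) =
        (x ^ 2 - c) / (x * Real.sqrt (x ^ 2 - c ^ 2)) := by
      rw [hsx]
      field_simp
    rw [key]
    apply div_pos (by linarith) (by positivity)

theorem stmt_6 (ω : ℝ) (hω : ω ∈ Set.Ioo 0 π) (hωeq : ω + Real.tan ω = 0)
    (a b : ℕ → ℝ)
    (ha : ∀ k, 1 / (2 * π) ≤ a k ∧
      2 * π * k = 2 * π * a k * Real.sqrt (1 - (1 / (2 * π * a k)) ^ 2)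
        - Real.arccos (1 / (2 * π * a k)))
    (hb : ∀ k, |(Real.cos ω)⁻¹| / (2 * π) ≤ b k ∧
      2 * π * k = 2 * π * b k * Real.sqrt (1 - ((Real.cos ω)⁻¹ / (2 * π * b k)) ^ 2)
        - Real.arccos ((Real.cos ω)⁻¹ / (2 * π * b k))) :
    0 < a 0 ∧ ∀ k, a k < b k ∧ b k < a (k + 1) := by
  obtain ⟨hω0, hωπ⟩ := hω
  have hπ : 0 < π := Real.pi_pos
  have hpi2 : π / 2 < ω := by
    by_contra h
    push_neg at h
    rcases lt_or_eq_of_le h with h | h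
    · have := Real.tan_pos_of_pos_of_lt_pi_div_two hω0 h
      linarith
    · rw [h, Real.tan_pi_div_two] at hωeq
      linarith
  have hcos : Real.cos ω < 0 :=
    Real.cos_neg_of_pi_div_two_lt_of_lt hpi2 (by linarith)
  set s : ℝ := (Real.cos ω)⁻¹ with hs_def
  have hs_neg : s < 0 := inv_lt_zero.mpr hcos
  clear_value s
  have htan : Real.tan ω = -ω := by linarith
  have hsin : Real.sin ω = -ω * Real.cos ω := by
    have h := Real.tan_eq_sin_div_cos ω
    rw [htan, eq_div_iff hcos.ne] at h
    linarith
  have hs2 : s ^ 2 = 1 + ω ^ 2 := by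
    have h1 : Real.sin ω ^ 2 + Real.cos ω ^ 2 = 1 := Real.sin_sq_add_cos_sq ω
    rw [hs_def, inv_pow, inv_eq_one_div,
      div_eq_iff (pow_ne_zero 2 hcos.ne)]
    linear_combination (-1 : ℝ) * h1 + (Real.sin ω - ω * Real.cos ω) * hsin
  have habs : |s| = Real.sqrt (1 + ω ^ 2) := by
    rw [← Real.sqrt_sq_eq_abs, hs2]
  have habs1 : 1 < |s| := by
    rw [habs, Real.lt_sqrt (by norm_num)]
    nlinarith
  have hs2gt : 1 < s ^ 2 := by nlinarith
  set F : ℝ → ℝ := fun x => Real.sqrt (x ^ 2 - 1) - Real.arccos (1 / x) with hF_def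
  set G : ℝ → ℝ := fun x => Real.sqrt (x ^ 2 - s ^ 2) - Real.arccos (s / x) with hG_def
  clear_value F G
  have hFmono : StrictMonoOn F (Set.Ici 1) := by
    rw [hF_def]
    simpa using mono_f (c := (1:ℝ)) (by norm_num)
  have hax : ∀ k : ℕ, 1 ≤ 2 * π * a k ∧ F (2 * π * a k) = 2 * π * k := by
    intro k
    obtain ⟨h1, h2⟩ := ha k
    have hx1 : 1 ≤ 2 * π * a k := by
      rw [div_le_iff₀ (by positivity)] at h1
      linarith
    have hx0 : 0 < 2 * π * a k := lt_of_lt_of_le one_pos hx1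
    refine ⟨hx1, ?_⟩
    have e := aux_sqrt (c := (1:ℝ)) hx0
    rw [one_pow] at e
    have hFv : F (2 * π * a k) =
        2 * π * a k * Real.sqrt (1 - (1 / (2 * π * a k)) ^ 2)
          - Real.arccos (1 / (2 * π * a k)) := by
      simp only [hF_def]
      rw [← e]
    rw [hFv]
    linarith
  have hbx : ∀ k : ℕ, |s| ≤ 2 * π * b k ∧ G (2 * π * b k) = 2 * π * k := by
    intro k
    obtain ⟨h1, h2⟩ := hb k
    have hx1 : |s| ≤ 2 * π * b k := by
      rw [div_le_iff₀ (by positivity)] at h1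
      linarith
    have hx0 : 0 < 2 * π * b k := lt_of_lt_of_le (lt_trans one_pos habs1) hx1
    refine ⟨hx1, ?_⟩
    have e := aux_sqrt (c := s) hx0
    have hGv : G (2 * π * b k) =
        2 * π * b k * Real.sqrt (1 - (s / (2 * π * b k)) ^ 2)
          - Real.arccos (s / (2 * π * b k)) := by
      simp only [hG_def]
      rw [← e]
    rw [hGv]
    linarith
  have hcomp : ∀ y : ℝ, |s| ≤ y → G y < F y ∧ F y < G y + 2 * π := by
    intro y hy
    have hy1 : 1 < y := lt_of_lt_of_le habs1 hy
    have hy0 : 0 < y := lt_trans one_pos hy1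
    have hys2 : s ^ 2 ≤ y ^ 2 := by nlinarith [sq_abs s, abs_nonneg s]
    have hsq1 : Real.sqrt (y ^ 2 - s ^ 2) < Real.sqrt (y ^ 2 - 1) := by
      apply Real.sqrt_lt_sqrt (by linarith)
      linarith
    have harc1 : Real.arccos (1 / y) ≤ Real.arccos (s / y) := by
      have hle : s / y ≤ 1 / y := (div_le_div_iff_of_pos_right hy0).mpr (by linarith)
      rw [Real.arccos_eq_pi_div_two_sub_arcsin, Real.arccos_eq_pi_div_two_sub_arcsin]
      have := Real.monotone_arcsin hle
      linarith
    constructor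
    · simp only [hF_def, hG_def]
      linarith
    · have hbound : Real.sqrt (y ^ 2 - 1) ≤ Real.sqrt (y ^ 2 - s ^ 2) + ω := by
        have hsplit : y ^ 2 - 1 = (y ^ 2 - s ^ 2) + (s ^ 2 - 1) := by ring
        have h1 : Real.sqrt (s ^ 2 - 1) = ω := by
          rw [show s ^ 2 - 1 = ω ^ 2 by linarith [hs2], Real.sqrt_sq hω0.le]
        calc Real.sqrt (y ^ 2 - 1)
            ≤ Real.sqrt (y ^ 2 - s ^ 2) + Real.sqrt (s ^ 2 - 1) := by
              rw [hsplit]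
              exact sqrt_subadd (by linarith) (by linarith)
          _ = Real.sqrt (y ^ 2 - s ^ 2) + ω := by rw [h1]
      simp only [hF_def, hG_def]
      have h2 := Real.arccos_le_pi (s / y)
      have h3 := Real.arccos_nonneg (1 / y)
      linarith
  refine ⟨?_, ?_⟩
  · have h1 := (ha 0).1
    have hp : (0:ℝ) < 1 / (2 * π) := by positivity
    linarith
  · intro k
    obtain ⟨hxk1, hFx⟩ := hax k
    obtain ⟨hyk1, hGy⟩ := hbx k
    obtain ⟨hxk1', hFx'⟩ := hax (k + 1)
    have hc := hcomp _ hyk1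
    have hyI : (2 * π * b k) ∈ Set.Ici (1:ℝ) :=
      Set.mem_Ici.mpr (le_trans habs1.le hyk1)
    have h2π : (0:ℝ) < 2 * π := by positivity
    constructor
    · have hlt : F (2 * π * a k) < F (2 * π * b k) := by
        rw [hFx]
        linarith [hc.1, hGy.ge, hGy.le]
      have := (hFmono.lt_iff_lt (Set.mem_Ici.mpr hxk1) hyI).mp hlt
      exact lt_of_mul_lt_mul_left (by linarith) h2π.le
    · have hlt : F (2 * π * b k) < F (2 * π * a (k + 1)) := by
        rw [hFx']
        push_cast
        linarith [hc.2, hGy.le, hGy.ge]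
      have := (hFmono.lt_iff_lt hyI (Set.mem_Ici.mpr hxk1')).mp hlt
      exact lt_of_mul_lt_mul_left (by linarith) h2π.le
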